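/- Let V be a finite-dimensional complex vector space, x, y ∈ End(V), i ∈ V, j : V → ℂ a linear functional, and λ ∈ ℂ with λ ≠ 0, satisfying x∘y − y∘x + i⊗j = λ·Id_V. If g : V → V is an invertible linear map with g∘x = x∘g, g∘y = y∘g and g(i) = i, then g = Id_V. (Thus GL(V) acts freely on the space of such quadruples, the Calogero–Moser space being the quotient.) -/

import Mathlib

set_option linter.unnecessarySimpa false


/-- `GL(V)` acts freely on the space of quadruples `(x, y, i, j)` satisfying the
Calogero–Moser moment map equation `x∘y − y∘x + i⊗j = λ·Id` with `λ ≠ 0`: any invertible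
linear map `g` commuting with `x` and `y` and fixing `i` is the identity. -/
theorem calogero_moser_free_action
    (V : Type*) [AddCommGroup V] [Module ℂ V] [FiniteDimensional ℂ V]
    (x y : V →ₗ[ℂ] V) (i : V) (j : V →ₗ[ℂ] ℂ) (lam : ℂ) (hlam : lam ≠ 0)
    (heq : x ∘ₗ y - y ∘ₗ x + j.smulRight i = lam • (LinearMap.id : V →ₗ[ℂ] V))
    (g : V ≃ₗ[ℂ] V)
    (hgx : ∀ u, g (x u) = x (g u)) (hgy : ∀ u, g (y u) = y (g u)) (hgi : g i = i) :
    ∀ u, g u = u := by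
  classical
  set A := Algebra.adjoin ℂ ({x, y} : Set (Module.End ℂ V)) with hA
  -- g commutes with every element of the adjoin algebra
  have hcomm : ∀ a ∈ A, ∀ u, g (a u) = a (g u) := by
    intro a ha
    induction ha using Algebra.adjoin_induction with
    | mem a ha =>
        rcases ha with h | h
        · subst h; exact hgx
        · simp only [Set.mem_singleton_iff] at h; subst h; exact hgy
    | algebraMap c =>
        intro u
        simp [Module.algebraMap_end_apply, map_smul]
    | add a b _ _ iha ihb =>
        intro u
        simp only [LinearMap.add_apply, map_add, iha u, ihb u]
    | mul a b _ _ iha ihb =>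
        intro u
        simp only [Module.End.mul_apply, iha (b u), ihb u]
  -- the submodule generated by i under x, y
  set W : Submodule ℂ V := Submodule.span ℂ {v | ∃ a ∈ A, a i = v} with hW
  have hiW : i ∈ W := Submodule.subset_span ⟨1, Subalgebra.one_mem A, rfl⟩
  have hstab : ∀ z : Module.End ℂ V, z ∈ A → ∀ w ∈ W, z w ∈ W := by
    intro z hz w hw
    induction hw using Submodule.span_induction with
    | mem v hv =>
        rcases hv with ⟨a, ha, rfl⟩
        exact Submodule.subset_span ⟨z * a, Subalgebra.mul_mem A hz ha, rfl⟩
    | zero => simpa using Submodule.zero_mem W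
    | add u v _ _ ihu ihv => simpa [map_add] using Submodule.add_mem W ihu ihv
    | smul c u _ ih => simpa [map_smul] using Submodule.smul_mem W c ih
  have hxA : x ∈ A := Algebra.subset_adjoin (Or.inl rfl)
  have hyA : y ∈ A := Algebra.subset_adjoin (Or.inr rfl)
  have hxW : W ≤ W.comap x := fun w hw => hstab x hxA w hw
  have hyW : W ≤ W.comap y := fun w hw => hstab y hyA w hw
  -- induced maps on the quotient
  set xq : (V ⧸ W) →ₗ[ℂ] (V ⧸ W) := W.mapQ W x hxW with hxq
  set yq : (V ⧸ W) →ₗ[ℂ] (V ⧸ W) := W.mapQ W y hyW with hyq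
  have hquot : xq ∘ₗ yq - yq ∘ₗ xq = lam • (LinearMap.id : (V ⧸ W) →ₗ[ℂ] (V ⧸ W)) := by
    ext u
    · have h := congrFun (congrArg DFunLike.coe heq) u
      simp only [LinearMap.add_apply, LinearMap.sub_apply, LinearMap.comp_apply,
        LinearMap.smulRight_apply, LinearMap.smul_apply, LinearMap.id_apply] at h
      have : x (y u) - y (x u) = lam • u - j u • i := by
        rw [← h]; abel
      simp only [LinearMap.sub_apply, LinearMap.comp_apply, hxq, hyq, Submodule.mkQ_apply,
        Submodule.mapQ_apply, LinearMap.smul_apply, LinearMap.id_apply]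
      rw [← Submodule.Quotient.mk_sub, ← Submodule.Quotient.mk_smul, this]
      rw [Submodule.Quotient.mk_sub]
      have : Submodule.Quotient.mk (p := W) (j u • i) = 0 := by
        rw [Submodule.Quotient.mk_eq_zero]
        exact Submodule.smul_mem W _ hiW
      rw [this, sub_zero]
  -- trace argument: the quotient is trivial
  have htr := congrArg (LinearMap.trace ℂ (V ⧸ W)) hquot
  rw [map_sub, LinearMap.trace_comp_comm', sub_self, map_smul, LinearMap.trace_id] at htr
  have h2 : lam * (Module.finrank ℂ (V ⧸ W) : ℂ) = 0 := by
    rw [← smul_eq_mul]; exact htr.symm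
  have hrank0 : Module.finrank ℂ (V ⧸ W) = 0 := by
    rcases mul_eq_zero.mp h2 with h | h
    · exact absurd h hlam
    · exact_mod_cast h
  have hWtop : W = ⊤ := by
    have : Subsingleton (V ⧸ W) := Module.finrank_zero_iff.mp hrank0
    exact Submodule.Quotient.subsingleton_iff.mp this
  -- conclude
  intro u
  have hu : u ∈ W := hWtop ▸ Submodule.mem_top
  induction hu using Submodule.span_induction with
  | mem v hv =>
      rcases hv with ⟨a, ha, rfl⟩
      rw [hcomm a ha i, hgi]
  | zero => simp
  | add u v _ _ ihu ihv => simp [map_add, ihu, ihv]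
  | smul c u _ ih => simp [map_smul, ih]
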